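/- arXiv:2411.06002 — 2 statements merged into one kernel-verified Lean document; each statement's English description precedes it below -/
import Mathlib

section
/- Let κ be a measurable cardinal, i.e., κ is uncountable and there exists a nonprincipal ultrafilter U on κ that is κ-complete (the intersection of any family of fewer than κ many sets in U is again in U). Then κ is strongly MInA. -/
open Cardinal Set

universe u v

/-- `f` depends on only finitely many coordinates of its argument; this is exactly continuity
with respect to the product topology on `ι → C`, where `C` and `X` carry the discrete topology. -/
def FinDep {ι : Type v} {C : Type u} {X : Type*} (f : (ι → C) → X) : Prop :=
  ∀ h : ι → C, ∃ F : Finset ι, ∀ h' : ι → C, (∀ i ∈ F, h' i = h i) → f h' = f h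

/-- The canonical type of `κ`-many colours: the ordinals below `κ.ord`,
equipped with their natural linear order. -/
abbrev HatColour (κ : Cardinal.{u}) : Type u := κ.ord.ToType

/-- `A` is mutually `F`-independent: no `α ∈ A` lies in a value of a function of the countable
family `F` applied to arguments from `A \\ {α}`. -/
def MutuallyIndep {O : Type u} (F : ℕ → Σ n : ℕ, (Fin n → O) → Set O) (A : Set O) : Prop :=
  ∀ α ∈ A, ∀ i : ℕ, ∀ x : Fin (F i).1 → O, (∀ j, x j ∈ A \ {α}) → α ∉ (F i).2 x

/-- `κ` has the `γ`-MInA: for every countable family of finitary functions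
`f : κ^n → [κ]^{<γ}` there is a countably infinite mutually independent subset of `κ`. -/
def MInA (κ γ : Cardinal.{u}) : Prop :=
  ∀ F : ℕ → Σ n : ℕ, (Fin n → HatColour κ) → Set (HatColour κ),
    (∀ i x, #((F i).2 x) < γ) →
    ∃ A : Set (HatColour κ), A.Countable ∧ A.Infinite ∧ MutuallyIndep F A

/-- `κ` is strongly MInA: it has the `γ`-MInA for every infinite cardinal `γ < κ`. -/
def StronglyMInA (κ : Cardinal.{u}) : Prop :=
  ∀ γ : Cardinal.{u}, ℵ₀ ≤ γ → γ < κ → MInA κ γ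

section MInAAux

variable {O : Type u}

/-- Iterated ultrafilter quantifier: `iterU U m P` says "for `U`-a.e. `b₀`, for `U`-a.e. `b₁`,
..., `P (b₀, ..., b_{m-1})`". -/
def iterU (U : Ultrafilter O) : (m : ℕ) → ((Fin m → O) → Prop) → Prop
  | 0, P => P (fun j => j.elim0)
  | m + 1, P => {b | iterU U m (fun v => P (Fin.cons b v))} ∈ U

lemma iterU_zero (U : Ultrafilter O) (P : (Fin 0 → O) → Prop) :
    iterU U 0 P = P (fun j => j.elim0) := rfl

lemma iterU_succ (U : Ultrafilter O) (m : ℕ) (P : (Fin (m + 1) → O) → Prop) :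
    iterU U (m + 1) P = ({b | iterU U m (fun v => P (Fin.cons b v))} ∈ U) := rfl

lemma iterU_mono (U : Ultrafilter O) : ∀ (m : ℕ) (P Q : (Fin m → O) → Prop),
    (∀ v, P v → Q v) → iterU U m P → iterU U m Q
  | 0, P, Q, h, hP => h _ hP
  | m + 1, P, Q, h, hP => by
    rw [iterU_succ] at hP ⊢
    exact Filter.mem_of_superset hP
      (fun b hb => iterU_mono U m _ _ (fun v hv => h _ hv) hb)

lemma iterU_not (U : Ultrafilter O) : ∀ (m : ℕ) (P : (Fin m → O) → Prop),
    iterU U m (fun v => ¬ P v) ↔ ¬ iterU U m P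
  | 0, P => Iff.rfl
  | m + 1, P => by
    rw [iterU_succ, iterU_succ, ← Ultrafilter.compl_mem_iff_notMem]
    have h : {b | iterU U m (fun v => ¬ P (Fin.cons b v))}
        = {b | iterU U m (fun v => P (Fin.cons b v))}ᶜ := by
      ext b
      simp only [Set.mem_setOf_eq, Set.mem_compl_iff]
      exact iterU_not U m _
    rw [h]

lemma iterU_iInter (U : Ultrafilter O) {κ : Cardinal.{u}}
    (hcomp : ∀ (ι : Type u) (s : ι → Set O), #ι < κ → (∀ i, s i ∈ U) → (⋂ i, s i) ∈ U)
    (ι : Type u) (hι : #ι < κ) :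
    ∀ (m : ℕ) (P : ι → (Fin m → O) → Prop),
      (∀ t, iterU U m (P t)) → iterU U m (fun v => ∀ t, P t v)
  | 0, P, h => fun t => h t
  | m + 1, P, h => by
    rw [iterU_succ]
    have h1 : ∀ t, {b | iterU U m (fun v => P t (Fin.cons b v))} ∈ U := fun t => h t
    have h2 := hcomp ι _ hι h1
    refine Filter.mem_of_superset h2 (fun b hb => ?_)
    simp only [Set.mem_iInter, Set.mem_setOf_eq] at hb
    exact iterU_iInter U hcomp ι hι m _ hb

lemma iterU_exists (U : Ultrafilter O) : ∀ (m : ℕ) (P : (Fin m → O) → Prop),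
    iterU U m P → ∃ v, P v
  | 0, _, h => ⟨_, h⟩
  | m + 1, P, h => by
    obtain ⟨b, hb⟩ := Ultrafilter.nonempty_of_mem h
    obtain ⟨v, hv⟩ := iterU_exists U m _ hb
    exact ⟨Fin.cons b v, hv⟩

/-- Key measure-theoretic lemma: if all values of `g` are small sets, then `U`-a.e. `b`
iteratively avoids all values of `g`. -/
lemma keyA (U : Ultrafilter O) {κ γ : Cardinal.{u}} (hγκ : γ < κ)
    (hcomp : ∀ (ι : Type u) (s : ι → Set O), #ι < κ → (∀ i, s i ∈ U) → (⋂ i, s i) ∈ U)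
    (hsm : ∀ s : Set O, #s < κ → sᶜ ∈ U)
    (m : ℕ) (g : (Fin m → O) → Set O) (hg : ∀ v, #(g v) < γ) :
    {b | iterU U m (fun v => b ∉ g v)} ∈ U := by
  have hlt : #{b | iterU U m (fun v => b ∈ g v)} < γ := by
    by_contra hge
    push_neg at hge
    obtain ⟨T, hT, hTc⟩ := Cardinal.le_mk_iff_exists_subset.mp hge
    have h1 : ∀ t : T, iterU U m (fun v => (t : O) ∈ g v) := fun t => hT t.2
    have h2 := iterU_iInter U hcomp T (by rw [hTc]; exact hγκ) m _ h1
    obtain ⟨v, hv⟩ := iterU_exists U m _ h2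
    have h3 : γ ≤ #(g v) := by
      rw [← hTc]
      exact Cardinal.mk_le_mk_of_subset (fun x hx => hv ⟨x, hx⟩)
    exact absurd (hg v) (not_lt.mpr h3)
  have h4 := hsm _ (hlt.trans hγκ)
  have heq : {b | iterU U m (fun v => b ∈ g v)}ᶜ = {b | iterU U m (fun v => b ∉ g v)} := by
    ext b
    simp only [Set.mem_compl_iff, Set.mem_setOf_eq]
    exact (iterU_not U m _).symm
  rwa [heq] at h4


variable [Nonempty O]



lemma snoc_mk_lt {k : ℕ} (a : Fin k → O) (b : O) {t : ℕ} (h : t < k) (h' : t < k + 1) :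
    (Fin.snoc a b : Fin (k + 1) → O) ⟨t, h'⟩ = a ⟨t, h⟩ := by
  have e : (⟨t, h'⟩ : Fin (k + 1)) = Fin.castSucc ⟨t, h⟩ := rfl
  rw [e, Fin.snoc_castSucc]

lemma snoc_mk_self {k : ℕ} (a : Fin k → O) (b : O) (h' : k < k + 1) :
    (Fin.snoc a b : Fin (k + 1) → O) ⟨k, h'⟩ = b := by
  have e : (⟨k, h'⟩ : Fin (k + 1)) = Fin.last k := rfl
  rw [e, Fin.snoc_last]

/-- Mixed assignment: index `t < k` refers to already-constructed `a`, index `t ≥ k` refers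
to the `(t-k)`-th future variable (from `v`), defaulting to an arbitrary element. -/
noncomputable def mixF (k : ℕ) (a : Fin k → O) (m : ℕ) (v : Fin m → O) (t : ℕ) : O :=
  if h : t < k then a ⟨t, h⟩
  else if h2 : t - k < m then v ⟨t - k, h2⟩
  else Classical.arbitrary O

/-- The inductive invariant of the construction. -/
def MIndInv (U : Ultrafilter O) (F : ℕ → Σ n : ℕ, (Fin n → O) → Set O)
    (k : ℕ) (a : Fin k → O) : Prop :=
  ∀ (i r m : ℕ) (hr : r < k) (s : Fin (F i).1 → ℕ),
    (∀ j, s j ≠ r) → (∀ j, s j < k + m) →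
    iterU U m (fun v => a ⟨r, hr⟩ ∉ (F i).2 (fun j => mixF k a m v (s j)))

lemma mixF_snoc (k : ℕ) (a : Fin k → O) (b : O) (m : ℕ) (v : Fin m → O) (t : ℕ) :
    mixF (k + 1) (Fin.snoc a b) m v t = mixF k a (m + 1) (Fin.cons b v) t := by
  unfold mixF
  rcases lt_trichotomy t k with h | heq | h
  · rw [dif_pos (by omega : t < k + 1), dif_pos h]
    exact snoc_mk_lt a b h _
  · subst heq
    rw [dif_pos (Nat.lt_succ_self t), dif_neg (lt_irrefl t),
      dif_pos (show t - t < m + 1 by omega)]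
    have h1 : (⟨t - t, show t - t < m + 1 by omega⟩ : Fin (m + 1)) = 0 :=
      Fin.ext (Nat.sub_self t)
    rw [h1, Fin.cons_zero]
    exact snoc_mk_self a b _
  · by_cases h3 : t - (k + 1) < m
    · rw [dif_neg (by omega : ¬ t < k + 1), dif_pos h3, dif_neg (by omega : ¬ t < k),
        dif_pos (show t - k < m + 1 by omega)]
      have h4 : (⟨t - k, show t - k < m + 1 by omega⟩ : Fin (m + 1))
          = Fin.succ ⟨t - (k + 1), h3⟩ := Fin.ext (by simp [Fin.succ]; omega)
      rw [h4, Fin.cons_succ]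
    · rw [dif_neg (by omega : ¬ t < k + 1), dif_neg h3, dif_neg (by omega : ¬ t < k),
        dif_neg (show ¬ t - k < m + 1 by omega)]

lemma snoc_injective {k : ℕ} {a : Fin k → O} {b : O} (ha : Function.Injective a)
    (hb : b ∉ Set.range a) : Function.Injective (Fin.snoc a b) := by
  intro x y hxy
  rcases Fin.eq_castSucc_or_eq_last x with ⟨x', rfl⟩ | rfl <;>
    rcases Fin.eq_castSucc_or_eq_last y with ⟨y', rfl⟩ | rfl
  · rw [Fin.snoc_castSucc, Fin.snoc_castSucc] at hxy
    rw [ha hxy]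
  · rw [Fin.snoc_castSucc, Fin.snoc_last] at hxy
    exact absurd ⟨x', hxy⟩ hb
  · rw [Fin.snoc_last, Fin.snoc_castSucc] at hxy
    exact absurd ⟨y', hxy.symm⟩ hb
  · rfl

lemma inv_step (U : Ultrafilter O) {κ γ : Cardinal.{u}} (hκ : ℵ₀ < κ) (hγκ : γ < κ)
    (hcomp : ∀ (ι : Type u) (s : ι → Set O), #ι < κ → (∀ i, s i ∈ U) → (⋂ i, s i) ∈ U)
    (hsm : ∀ s : Set O, #s < κ → sᶜ ∈ U)
    (F : ℕ → Σ n : ℕ, (Fin n → O) → Set O) (hF : ∀ i x, #((F i).2 x) < γ)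
    (k : ℕ) (a : Fin k → O) (ha : MIndInv U F k a) :
    ∃ b : O, b ∉ Set.range a ∧ MIndInv U F (k + 1) (Fin.snoc a b) := by
  classical
  -- countable intersections
  have hcount : ∀ (ι : Type) [Countable ι] (s : ι → Set O),
      (∀ i, s i ∈ U) → (⋂ i, s i) ∈ U := by
    intro ι _ s h
    rcases isEmpty_or_nonempty ι with hE | hN
    · rw [Set.iInter_of_empty]; exact Filter.univ_mem
    · obtain ⟨f, hf⟩ := exists_surjective_nat ι
      have heq : ⋂ i, s i = ⋂ n : ULift.{u} ℕ, s (f n.down) := by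
        ext x
        simp only [Set.mem_iInter]
        constructor
        · intro h n; exact h _
        · intro h i
          obtain ⟨n, rfl⟩ := hf i
          exact h ⟨n⟩
      rw [heq]
      refine hcomp _ _ ?_ (fun n => h _)
      rw [Cardinal.mk_uLift, Cardinal.mk_nat, Cardinal.lift_aleph0]
      exact hκ
  set ι := (Σ i : ℕ, (Fin (F i).1 → ℕ)) × ℕ × ℕ with hι
  -- sets protecting old elements
  set S : ι → Set O := fun σ =>
    {b | ∀ (hr : σ.2.1 < k), (∀ j, σ.1.2 j ≠ σ.2.1) → (∀ j, σ.1.2 j < k + (σ.2.2 + 1)) →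
      iterU U σ.2.2 (fun v => a ⟨σ.2.1, hr⟩ ∉
        (F σ.1.1).2 (fun j => mixF k a (σ.2.2 + 1) (Fin.cons b v) (σ.1.2 j)))} with hS
  have hSU : ∀ σ, S σ ∈ U := by
    rintro ⟨⟨i, s⟩, r, m⟩
    by_cases h1 : (r < k) ∧ (∀ j, s j ≠ r) ∧ (∀ j, s j < k + (m + 1))
    · have h2 := ha i r (m + 1) h1.1 s h1.2.1 h1.2.2
      rw [iterU_succ] at h2
      exact Filter.mem_of_superset h2 (fun b hb _ _ _ => hb)
    · refine Filter.univ_mem' (fun b hr hne hlt => absurd ⟨hr, hne, hlt⟩ h1)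
  -- sets protecting the new element
  set T : ι → Set O := fun σ =>
    {b | iterU U σ.2.2 (fun v => b ∉ (F σ.1.1).2 (fun j =>
      if h : σ.1.2 j < k then a ⟨σ.1.2 j, h⟩
      else if h2 : σ.1.2 j - (k + 1) < σ.2.2 then v ⟨σ.1.2 j - (k + 1), h2⟩
      else Classical.arbitrary O))} with hT
  have hTU : ∀ σ, T σ ∈ U := by
    rintro ⟨⟨i, s⟩, r, m⟩
    exact keyA U hγκ hcomp hsm m _ (fun v => hF i _)
  have hrange : (Set.range a)ᶜ ∈ U := by
    refine hsm _ ((Set.finite_range a).lt_aleph0.trans hκ)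
  have hG : (Set.range a)ᶜ ∩ ((⋂ σ, S σ) ∩ ⋂ σ, T σ) ∈ U :=
    Filter.inter_mem hrange (Filter.inter_mem (hcount ι S hSU) (hcount ι T hTU))
  obtain ⟨b, hb⟩ := Ultrafilter.nonempty_of_mem hG
  refine ⟨b, hb.1, ?_⟩
  intro i r m hr s hne hlt
  by_cases hrk : r < k
  · have hSb := Set.mem_iInter.mp hb.2.1 ⟨⟨i, s⟩, r, m⟩
    have h5 := hSb hrk hne (fun j => by show s j < k + (m + 1); have h6 := hlt j; omega)
    refine iterU_mono U m _ _ ?_ h5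
    intro v hv
    have e1 : (Fin.snoc a b : Fin (k + 1) → O) ⟨r, hr⟩ = a ⟨r, hrk⟩ := snoc_mk_lt a b hrk hr
    have e2 : (fun j => mixF (k + 1) (Fin.snoc a b) m v (s j))
        = fun j => mixF k a (m + 1) (Fin.cons b v) (s j) :=
      funext fun j => mixF_snoc k a b m v (s j)
    rw [e1, e2]
    exact hv
  · have hrk' : r = k := by omega
    have hTb := Set.mem_iInter.mp hb.2.2 ⟨⟨i, s⟩, r, m⟩
    refine iterU_mono U m _ _ ?_ hTb
    intro v hv
    have e1 : (Fin.snoc a b : Fin (k + 1) → O) ⟨r, hr⟩ = b := by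
      have e : (⟨r, hr⟩ : Fin (k + 1)) = Fin.last k := Fin.ext hrk'
      rw [e, Fin.snoc_last]
    have e2 : (fun j => mixF (k + 1) (Fin.snoc a b) m v (s j))
        = fun j => if h : s j < k then a ⟨s j, h⟩
          else if h2 : s j - (k + 1) < m then v ⟨s j - (k + 1), h2⟩
          else Classical.arbitrary O := by
      funext j
      have hj : s j ≠ k := by have h7 := hne j; omega
      unfold mixF
      by_cases h : s j < k
      · rw [dif_pos (by omega : s j < k + 1), dif_pos h]
        exact snoc_mk_lt a b h _
      · rw [dif_neg (by omega : ¬ s j < k + 1), dif_neg h]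
    rw [e1, e2]
    exact hv


/-- The recursively constructed chain of approximations. -/
noncomputable def mChain (U : Ultrafilter O) {κ γ : Cardinal.{u}} (hκ : ℵ₀ < κ) (hγκ : γ < κ)
    (hcomp : ∀ (ι : Type u) (s : ι → Set O), #ι < κ → (∀ i, s i ∈ U) → (⋂ i, s i) ∈ U)
    (hsm : ∀ s : Set O, #s < κ → sᶜ ∈ U)
    (F : ℕ → Σ n : ℕ, (Fin n → O) → Set O) (hF : ∀ i x, #((F i).2 x) < γ) :
    (k : ℕ) → {a : Fin k → O // MIndInv U F k a ∧ Function.Injective a} :=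
  Nat.rec
    ⟨fun j => j.elim0,
     fun _ r _ hr => absurd hr (Nat.not_lt_zero r),
     fun x => x.elim0⟩
    (fun k p =>
      ⟨Fin.snoc p.1 (Classical.choose (inv_step U hκ hγκ hcomp hsm F hF k p.1 p.2.1)),
       (Classical.choose_spec (inv_step U hκ hγκ hcomp hsm F hF k p.1 p.2.1)).2,
       snoc_injective p.2.2
         (Classical.choose_spec (inv_step U hκ hγκ hcomp hsm F hF k p.1 p.2.1)).1⟩)

lemma mChain_succ (U : Ultrafilter O) {κ γ : Cardinal.{u}} (hκ : ℵ₀ < κ) (hγκ : γ < κ)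
    (hcomp : ∀ (ι : Type u) (s : ι → Set O), #ι < κ → (∀ i, s i ∈ U) → (⋂ i, s i) ∈ U)
    (hsm : ∀ s : Set O, #s < κ → sᶜ ∈ U)
    (F : ℕ → Σ n : ℕ, (Fin n → O) → Set O) (hF : ∀ i x, #((F i).2 x) < γ) (k : ℕ) :
    (mChain U hκ hγκ hcomp hsm F hF (k + 1)).1
      = Fin.snoc (mChain U hκ hγκ hcomp hsm F hF k).1
          (Classical.choose (inv_step U hκ hγκ hcomp hsm F hF k
            (mChain U hκ hγκ hcomp hsm F hF k).1
            (mChain U hκ hγκ hcomp hsm F hF k).2.1)) := rfl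

end MInAAux

/-- If `κ` is measurable (uncountable, and carrying a nonprincipal `κ`-complete ultrafilter),
then `κ` is strongly MInA. -/
theorem stmt18 (κ : Cardinal.{u}) (hκ : ℵ₀ < κ)
    (U : Ultrafilter (HatColour κ))
    (hnonprincipal : ∀ a : HatColour κ, {a} ∉ U)
    (hcomplete : ∀ (ι : Type u) (s : ι → Set (HatColour κ)), #ι < κ →
      (∀ i, s i ∈ U) → (⋂ i, s i) ∈ U) :
    StronglyMInA κ := by
  intro γ hginf hγκ F hF
  haveI : Nonempty (HatColour κ) := Filter.nonempty_of_neBot (U : Filter (HatColour κ))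
  -- complements of small sets are in U
  have hsm : ∀ s : Set (HatColour κ), #s < κ → sᶜ ∈ U := by
    intro s hs
    have h1 : ∀ b : s, {(b : HatColour κ)}ᶜ ∈ U :=
      fun b => Ultrafilter.compl_mem_iff_notMem.mpr (hnonprincipal b)
    have h2 := hcomplete s (fun b => {(b : HatColour κ)}ᶜ) hs h1
    have heq : sᶜ = ⋂ b : s, {(b : HatColour κ)}ᶜ := by
      ext x
      simp only [Set.mem_compl_iff, Set.mem_iInter, Set.mem_singleton_iff, Subtype.forall]
      constructor
      · intro hx b hbs hxb
        exact hx (hxb ▸ hbs)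
      · intro hx hxs
        exact hx x hxs rfl
    rw [heq]
    exact h2
  set c := mChain U hκ hγκ hcomplete hsm F hF with hc
  set seqA : ℕ → HatColour κ := fun t => (c (t + 1)).1 ⟨t, Nat.lt_succ_self t⟩ with hseqA
  -- coherence
  have hcoh : ∀ (kk t : ℕ) (h : t < kk), (c kk).1 ⟨t, h⟩ = seqA t := by
    intro kk
    induction kk with
    | zero => exact fun t h => absurd h (Nat.not_lt_zero t)
    | succ k ih =>
      intro t h
      rcases Nat.lt_succ_iff_lt_or_eq.mp h with h' | rfl
      · have e : (c (k + 1)).1 ⟨t, h⟩ = (c k).1 ⟨t, h'⟩ := by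
          rw [hc, mChain_succ]
          exact snoc_mk_lt _ _ h' h
        rw [e]
        exact ih t h'
      · rfl
  -- injectivity of seqA
  have hkey : ∀ t t' : ℕ, t < t' → seqA t ≠ seqA t' := by
    intro t t' h hEq
    have e1 : seqA t = (c (t' + 1)).1 ⟨t, by omega⟩ := (hcoh _ _ _).symm
    have e2 : seqA t' = (c (t' + 1)).1 ⟨t', by omega⟩ := (hcoh _ _ _).symm
    rw [e1, e2] at hEq
    have := (c (t' + 1)).2.2 hEq
    have : t = t' := congrArg Fin.val this
    omega
  have hinj : Function.Injective seqA := by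
    intro t t' h
    rcases lt_trichotomy t t' with h' | h' | h'
    · exact absurd h (hkey _ _ h')
    · exact h'
    · exact absurd h.symm (hkey _ _ h')
  refine ⟨Set.range seqA, Set.countable_range seqA, Set.infinite_range_of_injective hinj, ?_⟩
  -- mutual independence
  intro α hα i x hx
  obtain ⟨r, rfl⟩ := hα
  choose s hs using fun j => (hx j).1
  have hne : ∀ j, s j ≠ r := by
    intro j hj
    exact (hx j).2 (by rw [← hs j, hj]; exact rfl)
  set K := (Finset.univ.sup s) + r + 1 with hK
  have hrK : r < K := by omega
  have hsK : ∀ j, s j < K + 0 := by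
    intro j
    have := Finset.le_sup (f := s) (Finset.mem_univ j)
    omega
  have hInv := (c K).2.1 i r 0 hrK s hne hsK
  rw [iterU_zero] at hInv
  have e1 : (c K).1 ⟨r, hrK⟩ = seqA r := hcoh K r hrK
  have e2 : (fun j => mixF K (c K).1 0 (fun j => j.elim0) (s j)) = x := by
    funext j
    have hj : s j < K := by have := hsK j; omega
    show mixF K (c K).1 0 (fun j => j.elim0) (s j) = x j
    unfold mixF
    rw [dif_pos hj, hcoh K (s j) hj]
    exact hs j
  rw [e1, e2] at hInv
  exact hInv
end

section
/- Let κ and γ be infinite cardinals and suppose the partition relation κ → (ω)^{<ω}_γ holds. Then κ has the γ-MInA. In particular, if κ → (ω)^{<ω}_δ holds for every cardinal δ < κ, then κ is strongly MInA. -/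
open Cardinal Set

universe u v

/-- The partition relation `κ → (ω)^{<ω}_γ`: every colouring of the finite subsets of `κ` in
`γ`-many colours admits a countably infinite homogeneous set. -/
def PartitionOmegaFin (κ γ : Cardinal.{u}) : Prop :=
  ∀ f : Finset (HatColour κ) → γ.out,
    ∃ H : Set (HatColour κ), H.Countable ∧ H.Infinite ∧
      ∀ s t : Finset (HatColour κ), ↑s ⊆ H → ↑t ⊆ H → s.card = t.card → f s = f t

namespace Stmt19Aux

open scoped Classical

variable {κ γ : Cardinal.{u}}
variable (F : ℕ → Σ n : ℕ, (Fin n → HatColour κ) → Set (HatColour κ))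

/-- padded superset inside an infinite set -/
theorem exists_superset (H : Set (HatColour κ)) (hH : H.Infinite) (s₀ : Finset (HatColour κ))
    (hs₀ : ↑s₀ ⊆ H) (m : ℕ) (hm : s₀.card ≤ m) :
    ∃ s : Finset (HatColour κ), s₀ ⊆ s ∧ ↑s ⊆ H ∧ s.card = m := by
  obtain ⟨t, htH, htc⟩ := (hH.diff s₀.finite_toSet).exists_subset_card_eq (m - s₀.card)
  refine ⟨s₀ ∪ t, Finset.subset_union_left, ?_, ?_⟩
  · push_cast
    exact union_subset hs₀ (htH.trans diff_subset)
  · have hdisj : Disjoint s₀ t := by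
      rw [Finset.disjoint_left]
      intro a ha hat
      exact (htH hat).2 ha
    rw [Finset.card_union_of_disjoint hdisj, htc]
    omega

variable (e : ∀ i (y : Fin (F i).1 → HatColour κ), ((F i).2 y) → γ.out)

noncomputable def comp (s : Finset (HatColour κ)) (i p : ℕ) (q : ℕ → ℕ) : Option γ.out :=
  if h : i < s.card ∧ p < s.card ∧ ∀ j, (hj : j < (F i).1) → q j < s.card ∧ q j ≠ p then
    if hm : s.orderEmbOfFin rfl ⟨p, h.2.1⟩ ∈
        (F i).2 (fun j => s.orderEmbOfFin rfl ⟨q j.1, (h.2.2 j.1 j.2).1⟩) then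
      some (e i _ ⟨_, hm⟩)
    else none
  else none

theorem comp_eval (s : Finset (HatColour κ)) (i p : ℕ) (q : ℕ → ℕ)
    (hi : i < s.card) (hp : p < s.card)
    (hq : ∀ j, j < (F i).1 → q j < s.card ∧ q j ≠ p)
    (α : HatColour κ) (y : Fin (F i).1 → HatColour κ)
    (hα : s.orderEmbOfFin rfl ⟨p, hp⟩ = α)
    (hy : ∀ (j : Fin (F i).1) (hj : q j.1 < s.card), s.orderEmbOfFin rfl ⟨q j.1, hj⟩ = y j) :
    comp F e s i p q = if hm : α ∈ (F i).2 y then some (e i y ⟨α, hm⟩) else none := by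
  subst hα
  have hy' : y = fun j => s.orderEmbOfFin rfl ⟨q j.1, (hq j.1 j.2).1⟩ :=
    funext fun j => (hy j _).symm
  subst hy'
  rw [comp, dif_pos ⟨hi, hp, hq⟩]

theorem comp_congr (s : Finset (HatColour κ)) (i p : ℕ) (q q' : ℕ → ℕ)
    (hi : i < s.card) (hp : p < s.card)
    (hq : ∀ j, j < (F i).1 → q j < s.card ∧ q j ≠ p)
    (hqq : ∀ j, j < (F i).1 → q j = q' j) :
    comp F e s i p q = comp F e s i p q' := by
  have hq' : ∀ j, j < (F i).1 → q' j < s.card ∧ q' j ≠ p := fun j hj => (hqq j hj) ▸ hq j hj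
  rw [comp_eval F e s i p q hi hp hq (s.orderEmbOfFin rfl ⟨p, hp⟩)
        (fun j => s.orderEmbOfFin rfl ⟨q j.1, (hq j.1 j.2).1⟩) rfl (fun j hj => rfl),
      comp_eval F e s i p q' hi hp hq' (s.orderEmbOfFin rfl ⟨p, hp⟩)
        (fun j => s.orderEmbOfFin rfl ⟨q j.1, (hq j.1 j.2).1⟩) rfl
        (fun j hj => congrArg _ (Fin.ext (hqq j.1 j.2).symm))]

def Col (γ : Cardinal.{u}) (F : ℕ → Σ n : ℕ, (Fin n → HatColour κ) → Set (HatColour κ))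
    (m : ℕ) : Type u :=
  ∀ i : Fin m, Fin m → ((Fin (F i.1).1 → Fin m) → Option γ.out)

noncomputable def colfun (m : ℕ) (s : Finset (HatColour κ)) : Col γ F m :=
  fun i p q => comp F e s i.1 p.1 (fun j => if h : j < (F i.1).1 then (q ⟨j, h⟩).1 else 0)

theorem col_emb (hγ : ℵ₀ ≤ γ) (m : ℕ) : Nonempty (Col γ F m ↪ γ.out) := by
  have E1 : Col γ F m ↪ ((Σ i : Fin m, Fin m × (Fin (F i.1).1 → Fin m)) → Option γ.out) := by
    refine ⟨fun f k => f k.1 k.2.1 k.2.2, ?_⟩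
    intro f g h
    funext i p q
    exact congrFun h ⟨i, p, q⟩
  have hle : #((Σ i : Fin m, Fin m × (Fin (F i.1).1 → Fin m)) → Option γ.out) ≤ γ := by
    set K := (Σ i : Fin m, Fin m × (Fin (F i.1).1 → Fin m))
    have h1 : #(K → Option γ.out) = #(ULift.{u} K → Option γ.out) :=
      Cardinal.mk_congr (Equiv.arrowCongr Equiv.ulift.symm (Equiv.refl _))
    rw [h1, ← Cardinal.power_def, Cardinal.mk_option, Cardinal.mk_out,
      Cardinal.add_one_eq hγ, Cardinal.mk_fintype, Cardinal.power_natCast]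
    exact Cardinal.power_nat_le hγ
  obtain ⟨E2⟩ := (Cardinal.le_def _ _).mp (hle.trans_eq (Cardinal.mk_out γ).symm)
  exact ⟨E1.trans E2⟩

theorem orderEmbOfFin_cast {s : Finset (HatColour κ)} {k : ℕ} (h : s.card = k)
    (j : ℕ) (hj : j < s.card) (hj' : j < k) :
    s.orderEmbOfFin rfl ⟨j, hj⟩ = s.orderEmbOfFin h ⟨j, hj'⟩ := by
  subst h; rfl


theorem main (κ γ : Cardinal.{u}) (hγ : ℵ₀ ≤ γ) (hpart : PartitionOmegaFin κ γ) :
    MInA κ γ := by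
  classical
  intro F hF
  have e' : ∀ i (y : Fin (F i).1 → HatColour κ), ((F i).2 y) ↪ γ.out := fun i y =>
    Classical.choice ((Cardinal.le_def _ _).mp ((hF i y).le.trans_eq (Cardinal.mk_out γ).symm))
  set e : ∀ i (y : Fin (F i).1 → HatColour κ), ((F i).2 y) → γ.out :=
    fun i y => ⇑(e' i y) with he
  obtain ⟨Φ⟩ : Nonempty (∀ m, Col γ F m ↪ γ.out) := ⟨fun m => Classical.choice (col_emb F hγ m)⟩
  obtain ⟨H, Hcnt, Hinf, Hhom⟩ := hpart (fun s => Φ s.card (colfun F e s.card s))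
  refine ⟨H, Hcnt, Hinf, ?_⟩
  intro α hα i x hx hmem
  set m := i + (F i).1 + 2 with hm
  -- Constancy of components on subsets of `H` of equal cardinality.
  have key : ∀ s t : Finset (HatColour κ), ↑s ⊆ H → ↑t ⊆ H → s.card = t.card →
      ∀ i' p q, i' < s.card → p < s.card →
      (∀ j, j < (F i').1 → q j < s.card ∧ q j ≠ p) →
      comp F e s i' p q = comp F e t i' p q := by
    intro s t hsH htH hst i' p q hi' hp hq
    have hg : Φ s.card (colfun F e s.card s) = Φ t.card (colfun F e t.card t) :=
      Hhom s t hsH htH hst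
    rw [← hst] at hg
    have hcol := (Φ s.card).injective hg
    have hq2 : ∀ j, j < (F i').1 → q j < t.card ∧ q j ≠ p := by
      intro j hj; have := hq j hj; omega
    have h0 := congrFun (congrFun (congrFun hcol ⟨i', hi'⟩) ⟨p, hp⟩)
      (fun j => (⟨q j.1, (hq j.1 j.2).1⟩ : Fin s.card))
    have hthis : comp F e s i' p (fun j => if h : j < (F i').1 then q j else 0) =
        comp F e t i' p (fun j => if h : j < (F i').1 then q j else 0) := h0
    have hcs := comp_congr F e s i' p q (fun j => if h : j < (F i').1 then q j else 0)
      hi' hp hq (fun j hj => by simp [hj])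
    have hct := comp_congr F e t i' p q (fun j => if h : j < (F i').1 then q j else 0)
      (by omega) (by omega) hq2 (fun j hj => by simp [hj])
    exact hcs.trans (hthis.trans hct.symm)
  -- The witness set `s`.
  have hxH : ∀ j, x j ∈ H := fun j => (hx j).1
  have hxne : ∀ j, x j ≠ α := fun j hj => (hx j).2 (by rw [hj]; exact rfl)
  set s₀ : Finset (HatColour κ) := insert α (Finset.image x Finset.univ) with hs₀
  have hs₀H : ↑s₀ ⊆ H := by
    intro a ha
    simp only [hs₀, Finset.coe_insert, Set.mem_insert_iff, Finset.coe_image,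
      Set.mem_image, Finset.mem_coe, Finset.mem_image] at ha
    rcases ha with rfl | ⟨j, _, rfl⟩
    · exact hα
    · exact hxH j
  have hs₀card : s₀.card ≤ m := by
    have h1 : s₀.card ≤ (Finset.image x Finset.univ).card + 1 := by
      rw [hs₀]; exact Finset.card_insert_le _ _
    have h2 := Finset.card_image_le (f := x) (s := Finset.univ)
    simp only [Finset.card_univ, Fintype.card_fin] at h2
    omega
  obtain ⟨s, hs₀s, hsH, hscard⟩ := exists_superset H Hinf s₀ hs₀H m hs₀card
  have hαs : α ∈ s := hs₀s (Finset.mem_insert_self _ _)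
  have hxs : ∀ j, x j ∈ s := fun j =>
    hs₀s (Finset.mem_insert_of_mem (Finset.mem_image_of_mem x (Finset.mem_univ j)))
  set σ := s.orderIsoOfFin hscard with hσ
  set p : Fin m := σ.symm ⟨α, hαs⟩ with hpdef
  set q : ℕ → ℕ := fun j => if hj : j < (F i).1 then (σ.symm ⟨x ⟨j, hj⟩, hxs _⟩).1 else 0 with hqdef
  have hi_s : i < s.card := by omega
  have hp_s : p.1 < s.card := by rw [hscard]; exact p.isLt
  have hqm : ∀ j : Fin (F i).1, q j.1 = (σ.symm ⟨x j, hxs j⟩).1 := by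
    intro j
    simp only [hqdef, dif_pos j.2]
  have hq_s : ∀ j, j < (F i).1 → q j < s.card ∧ q j ≠ p.1 := by
    intro j hj
    have h1 := hqm ⟨j, hj⟩
    constructor
    · rw [hscard, h1]; exact (σ.symm _).isLt
    · rw [h1]
      intro hcon
      have : σ.symm ⟨x ⟨j, hj⟩, hxs _⟩ = σ.symm ⟨α, hαs⟩ := Fin.ext hcon
      have := σ.symm.injective this
      exact hxne ⟨j, hj⟩ (congrArg Subtype.val this)
  have hemb_iso : ∀ (k : ℕ) (hk : k < s.card) (hk' : k < m),
      s.orderEmbOfFin rfl ⟨k, hk⟩ = (σ ⟨k, hk'⟩ : HatColour κ) := by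
    intro k hk hk'
    rw [orderEmbOfFin_cast hscard k hk hk', hσ, Finset.coe_orderIsoOfFin_apply]
  have hα_emb : s.orderEmbOfFin rfl ⟨p.1, hp_s⟩ = α := by
    rw [hemb_iso p.1 hp_s p.isLt]
    have : (⟨p.1, p.isLt⟩ : Fin m) = p := Fin.ext rfl
    rw [this, hpdef, OrderIso.apply_symm_apply]
  have hy_emb : ∀ (j : Fin (F i).1) (hj : q j.1 < s.card), s.orderEmbOfFin rfl ⟨q j.1, hj⟩ = x j := by
    intro j hj
    have hj' : q j.1 < m := by omega
    rw [hemb_iso (q j.1) hj hj']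
    have : (⟨q j.1, hj'⟩ : Fin m) = σ.symm ⟨x j, hxs j⟩ := Fin.ext (hqm j)
    rw [this, OrderIso.apply_symm_apply]
  have hcomp_s : comp F e s i p.1 q = some (e i x ⟨α, hmem⟩) := by
    rw [comp_eval F e s i p.1 q hi_s hp_s hq_s α x hα_emb hy_emb, dif_pos hmem]
  -- The comparison sets `t` and `t'`.
  obtain ⟨B, hBH, hBcard⟩ := Hinf.exists_subset_card_eq (2 * m)
  set b := B.orderEmbOfFin hBcard with hb
  have hbH : ∀ k, b k ∈ H := fun k => hBH (B.orderEmbOfFin_mem hBcard k)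
  set emb1 : Fin m → HatColour κ :=
    fun j => b ⟨2 * j.1, by have := j.isLt; omega⟩ with hemb1
  set emb2 : Fin m → HatColour κ :=
    fun j => b ⟨if j.1 = p.1 then 2 * p.1 + 1 else 2 * j.1,
      by have := j.isLt; have := p.isLt; split <;> omega⟩ with hemb2
  have hmono1 : StrictMono emb1 := by
    intro a c hac
    simp only [hemb1]
    exact b.strictMono (by simp only [Fin.mk_lt_mk]; omega)
  have hmono2 : StrictMono emb2 := by
    intro a c hac
    simp only [hemb2]
    refine b.strictMono ?_
    simp only [Fin.mk_lt_mk]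
    have hac' : a.1 < c.1 := hac
    rcases Nat.lt_or_ge a.1 p.1 with h | h <;> rcases Nat.lt_or_ge p.1 c.1 with h' | h' <;>
      split <;> split <;> omega
  set t : Finset (HatColour κ) := Finset.map ⟨emb1, hmono1.injective⟩ Finset.univ with ht
  set t' : Finset (HatColour κ) := Finset.map ⟨emb2, hmono2.injective⟩ Finset.univ with ht'
  have htcard : t.card = m := by simp [ht]
  have ht'card : t'.card = m := by simp [ht']
  have htH : ↑t ⊆ H := by
    intro a ha
    simp only [ht, Finset.coe_map, Set.mem_image, Finset.coe_univ, Set.mem_univ,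
      Function.Embedding.coeFn_mk, true_and] at ha
    obtain ⟨j, rfl⟩ := ha
    exact hbH _
  have ht'H : ↑t' ⊆ H := by
    intro a ha
    simp only [ht', Finset.coe_map, Set.mem_image, Finset.coe_univ, Set.mem_univ,
      Function.Embedding.coeFn_mk, true_and] at ha
    obtain ⟨j, rfl⟩ := ha
    exact hbH _
  have huniq1 : emb1 = ⇑(t.orderEmbOfFin htcard) :=
    Finset.orderEmbOfFin_unique htcard (fun k => by simp [ht]) hmono1
  have huniq2 : emb2 = ⇑(t'.orderEmbOfFin ht'card) :=
    Finset.orderEmbOfFin_unique ht'card (fun k => by simp [ht']) hmono2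
  -- component values on `t` and `t'`
  set yt : Fin (F i).1 → HatColour κ := fun j => emb1 ⟨q j.1, by
    have := (hq_s j.1 j.2).1; omega⟩ with hyt
  set βt : HatColour κ := emb1 p with hβt
  set βt' : HatColour κ := emb2 p with hβt'
  have hp_t : p.1 < t.card := by rw [htcard]; exact p.isLt
  have hp_t' : p.1 < t'.card := by rw [ht'card]; exact p.isLt
  have hq_t : ∀ j, j < (F i).1 → q j < t.card ∧ q j ≠ p.1 := by
    intro j hj; have := hq_s j hj; omega
  have hq_t' : ∀ j, j < (F i).1 → q j < t'.card ∧ q j ≠ p.1 := by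
    intro j hj; have := hq_s j hj; omega
  have hα_t : t.orderEmbOfFin rfl ⟨p.1, hp_t⟩ = βt := by
    rw [orderEmbOfFin_cast htcard p.1 hp_t p.isLt, ← congrFun huniq1 ⟨p.1, p.isLt⟩, hβt]
  have hα_t' : t'.orderEmbOfFin rfl ⟨p.1, hp_t'⟩ = βt' := by
    rw [orderEmbOfFin_cast ht'card p.1 hp_t' p.isLt, ← congrFun huniq2 ⟨p.1, p.isLt⟩, hβt']
  have hy_t : ∀ (j : Fin (F i).1) (hj : q j.1 < t.card), t.orderEmbOfFin rfl ⟨q j.1, hj⟩ = yt j := by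
    intro j hj
    have hj' : q j.1 < m := by omega
    rw [orderEmbOfFin_cast htcard (q j.1) hj hj', ← congrFun huniq1 ⟨q j.1, hj'⟩, hyt]
  have hy_t' : ∀ (j : Fin (F i).1) (hj : q j.1 < t'.card), t'.orderEmbOfFin rfl ⟨q j.1, hj⟩ = yt j := by
    intro j hj
    have hj' : q j.1 < m := by omega
    rw [orderEmbOfFin_cast ht'card (q j.1) hj hj', ← congrFun huniq2 ⟨q j.1, hj'⟩, hyt, hemb2]
    have hne : q j.1 ≠ p.1 := (hq_s j.1 j.2).2
    exact congrArg b (Fin.ext (by simp [if_neg hne]))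
  have hcomp_t : comp F e t i p.1 q =
      if hm : βt ∈ (F i).2 yt then some (e i yt ⟨βt, hm⟩) else none :=
    comp_eval F e t i p.1 q (by omega) hp_t hq_t βt yt hα_t hy_t
  have hcomp_t' : comp F e t' i p.1 q =
      if hm : βt' ∈ (F i).2 yt then some (e i yt ⟨βt', hm⟩) else none :=
    comp_eval F e t' i p.1 q (by omega) hp_t' hq_t' βt' yt hα_t' hy_t'
  -- put everything together
  have hst := key s t hsH htH (by omega) i p.1 q hi_s hp_s hq_s
  have hst' := key s t' hsH ht'H (by omega) i p.1 q hi_s hp_s hq_s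
  rw [hcomp_s, hcomp_t] at hst
  rw [hcomp_s, hcomp_t'] at hst'
  by_cases hmt : βt ∈ (F i).2 yt
  · by_cases hmt' : βt' ∈ (F i).2 yt
    · rw [dif_pos hmt] at hst
      rw [dif_pos hmt'] at hst'
      have heq : e i yt ⟨βt, hmt⟩ = e i yt ⟨βt', hmt'⟩ := by
        have h1 := Option.some.inj hst
        have h2 := Option.some.inj hst'
        rw [← h1, ← h2]
      have := (e' i yt).injective heq
      have hββ : βt = βt' := Subtype.mk_eq_mk.mp this
      have h2p : (⟨2 * p.1, by have := p.isLt; omega⟩ : Fin (2 * m)) =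
          ⟨2 * p.1 + 1, by have := p.isLt; omega⟩ := by
        apply b.injective
        have : βt = b ⟨2 * p.1, by have := p.isLt; omega⟩ := rfl
        have h' : βt' = b ⟨2 * p.1 + 1, by have := p.isLt; omega⟩ := by
          rw [hβt', hemb2]
          exact congrArg b (Fin.ext (by simp))
        rw [← this, ← h', hββ]
      simp only [Fin.mk.injEq] at h2p
      omega
    · rw [dif_neg hmt'] at hst'
      exact Option.some_ne_none _ hst'
  · rw [dif_neg hmt] at hst
    exact Option.some_ne_none _ hst

end Stmt19Aux

/-- For infinite `κ` and `γ`: if `κ → (ω)^{<ω}_γ` then `κ` has the `γ`-MInA; in particular, if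
`κ → (ω)^{<ω}_δ` holds for every `δ < κ` then `κ` is strongly MInA. -/
theorem stmt19 (κ γ : Cardinal.{u}) (hκ : ℵ₀ ≤ κ) (hγ : ℵ₀ ≤ γ) :
    (PartitionOmegaFin κ γ → MInA κ γ) ∧
    ((∀ δ : Cardinal.{u}, δ < κ → PartitionOmegaFin κ δ) → StronglyMInA κ) :=
  ⟨fun hp => Stmt19Aux.main κ γ hγ hp,
   fun hall δ hδ hδκ => Stmt19Aux.main κ δ hδ (hall δ hδκ)⟩
end
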